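/- Let n ∈ ℕ, s > 0 and Y ∈ ℝ^d. Then φ(s,s,Y) = 1, and the function s' ↦ φ(s,s',Y) has derivative 0 at s' = s (i.e. HasDerivAt (fun s' => φ(s,s',Y)) 0 s). (This is the key computation in the proof of Theorem 2.3, showing that the connection induced by the infinitesimal prequantum BKS pairing coincides with the prequantum connection δ^{prQ}.) -/

import Mathlib

open scoped Real BigOperators

/-- `sinhc x = sinh x / x` for `x ≠ 0`, and `sinhc 0 = 1`. -/
noncomputable def sinhc (x : ℝ) : ℝ := if x = 0 then 1 else Real.sinh x / x

/-- The function `η(Y) = ∏_{i ∈ I} sinhc (α_i Y)` (equation (5) of the paper). -/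
noncomputable def eta {d : ℕ} {I : Type*} [Fintype I]
    (α : I → (EuclideanSpace ℝ (Fin d) →ₗ[ℝ] ℝ)) (Y : EuclideanSpace ℝ (Fin d)) : ℝ :=
  ∏ i, sinhc (α i Y)

/-- The function `φ(s,s',Y)` of equation (13) of the paper, with `n = dim K`. -/
noncomputable def phi {d : ℕ} {I : Type*} [Fintype I]
    (α : I → (EuclideanSpace ℝ (Fin d) →ₗ[ℝ] ℝ)) (n : ℕ) (s s' : ℝ)
    (Y : EuclideanSpace ℝ (Fin d)) : ℝ :=
  ((s + s') / (2 * Real.sqrt (s * s'))) ^ n * (eta α (((s + s') / 2) • Y)) ^ 2 /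
    (eta α (s • Y) * eta α (s' • Y))

lemma sinhc_pos (x : ℝ) : 0 < sinhc x := by
  rcases lt_trichotomy x 0 with h | h | h
  · rw [sinhc, if_neg h.ne]
    exact div_pos_of_neg_of_neg (Real.sinh_neg_iff.2 h) h
  · simp [sinhc, h]
  · rw [sinhc, if_neg h.ne']
    exact div_pos (Real.sinh_pos_iff.2 h) h

lemma sinhc_diff {c s : ℝ} (hs : 0 < s) :
    DifferentiableAt ℝ (fun t => sinhc (t * c)) s := by
  rcases eq_or_ne c 0 with rfl | hc
  · simpa [sinhc] using differentiableAt_const (1 : ℝ)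
  · have hsc : s * c ≠ 0 := mul_ne_zero hs.ne' hc
    have hmul : DifferentiableAt ℝ (fun t : ℝ => t * c) s :=
      differentiableAt_id.mul_const c
    have hev : ∀ᶠ t in nhds s, t * c ≠ 0 :=
      hmul.continuousAt.eventually_ne hsc
    have hdiff : DifferentiableAt ℝ (fun t => Real.sinh (t * c) / (t * c)) s :=
      (hmul.sinh).div hmul hsc
    refine hdiff.congr_of_eventuallyEq ?_
    filter_upwards [hev] with t ht
    simp [sinhc, ht]

/-- The key computation in the proof of Theorem 2.3: `φ(s,s,Y) = 1` and
`∂φ(s,s',Y)/∂s'` vanishes at `s' = s`. -/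
theorem statement_1 {d : ℕ} (hd : 1 ≤ d) {I : Type*} [Fintype I]
    (α : I → (EuclideanSpace ℝ (Fin d) →ₗ[ℝ] ℝ)) (n : ℕ)
    {s : ℝ} (hs : 0 < s) (Y : EuclideanSpace ℝ (Fin d)) :
    phi α n s s Y = 1 ∧ HasDerivAt (fun s' => phi α n s s' Y) 0 s := by
  set u : ℝ → ℝ := fun t => ∏ i, sinhc (t * α i Y) with hu
  have hu_eq : ∀ t : ℝ, eta α (t • Y) = u t := by
    intro t
    simp [eta, hu, map_smul, smul_eq_mul]
  have hupos : ∀ t : ℝ, 0 < u t := fun t =>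
    Finset.prod_pos fun i _ => sinhc_pos _
  have hune : u s ≠ 0 := (hupos s).ne'
  have hsqrt : Real.sqrt (s * s) = s := Real.sqrt_mul_self hs.le
  have hss : (s + s) / 2 = s := by ring
  -- differentiability of u at every positive point
  have hudiff : ∀ {t : ℝ}, 0 < t → DifferentiableAt ℝ u t := by
    intro t ht
    exact DifferentiableAt.fun_finsetProd fun i _ => sinhc_diff ht
  set u' : ℝ := deriv u s with hu'
  have hud : HasDerivAt u u' s := (hudiff hs).hasDerivAt
  -- phi as a function of s' in terms of u
  have hphi : ∀ s' : ℝ, phi α n s s' Y =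
      ((s + s') / (2 * Real.sqrt (s * s'))) ^ n * (u ((s + s') / 2)) ^ 2 /
        (u s * u s') := by
    intro s'
    rw [phi, hu_eq, hu_eq, hu_eq]
  have h1 : (s + s) / (2 * s) = 1 := by
    rw [div_eq_one_iff_eq (by positivity)]; ring
  constructor
  · rw [hphi, hsqrt, hss, h1, one_pow, one_mul, sq,
      div_self (mul_ne_zero hune hune)]
  · -- derivative of the base (s+t)/(2*√(s*t)) at t = s
    have hnum : HasDerivAt (fun t : ℝ => s + t) 1 s := (hasDerivAt_id s).const_add s
    have hsqrtd : HasDerivAt (fun t : ℝ => Real.sqrt (s * t))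
        (1 / (2 * Real.sqrt (s * s)) * s) s := by
      have hinner : HasDerivAt (fun t : ℝ => s * t) s s := by
        simpa using (hasDerivAt_id s).const_mul s
      exact (Real.hasDerivAt_sqrt (mul_ne_zero hs.ne' hs.ne')).comp s hinner
    have hden : HasDerivAt (fun t : ℝ => 2 * Real.sqrt (s * t))
        (2 * (1 / (2 * Real.sqrt (s * s)) * s)) s := hsqrtd.const_mul 2
    have hdenne : 2 * Real.sqrt (s * s) ≠ 0 := by rw [hsqrt]; positivity
    have hb := hnum.div hden hdenne
    have hb0 : HasDerivAt (fun t : ℝ => (s + t) / (2 * Real.sqrt (s * t))) 0 s := by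
      refine hb.congr_deriv ?_
      rw [hsqrt]
      field_simp
      ring
    have hbn := hb0.pow n
    -- derivative of u ((s+t)/2)
    have hhalf : HasDerivAt (fun t : ℝ => (s + t) / 2) (1 / 2) s := by
      simpa using ((hasDerivAt_id s).const_add s).div_const 2
    have hud2 : HasDerivAt u u' ((s + s) / 2) := by rw [hss]; exact hud
    have hm : HasDerivAt (fun t : ℝ => u ((s + t) / 2)) (u' * (1 / 2)) s :=
      HasDerivAt.comp (h := fun t : ℝ => (s + t) / 2) s hud2 hhalf
    have hm2 := hm.pow 2
    -- derivative of t ↦ u s * u t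
    have hg3 : HasDerivAt (fun t : ℝ => u s * u t) (u s * u') s := hud.const_mul (u s)
    have hg3ne : u s * u s ≠ 0 := mul_ne_zero hune hune
    have H := ((hbn.mul hm2).div hg3 hg3ne)
    have Heq : (fun s' : ℝ => phi α n s s' Y) =
        fun t : ℝ => ((s + t) / (2 * Real.sqrt (s * t))) ^ n * (u ((s + t) / 2)) ^ 2 /
          (u s * u t) := funext hphi
    rw [Heq]
    refine H.congr_deriv ?_
    simp only [Pi.mul_apply, Pi.pow_apply]
    rw [hsqrt, hss, h1]
    field_simp
    ring
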